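/- arXiv:2508.07443 — 2 statements merged into one kernel-verified Lean document; each statement's English description precedes it below -/
import Mathlib

section
/- The subspace of power series inside Laurent series is its own annihilator under the residue pairing: for a formal Laurent series f over a field K, the coefficient of z^{-1} in f·g vanishes for every formal power series g (viewed as a Laurent series) if and only if f itself is a formal power series (has no negative-degree coefficients). -/
/-- The power series `K⟦z⟧ ⊆ K⸨z⸩` are their own annihilator under the residue pairing:
the coefficient of `z⁻¹` in `f · g` vanishes for every power series `g` if and only if
`f` has no negative-degree coefficients, i.e. `f` is itself a power series. -/
theorem powerSeries_self_annihilator_residue_pairing {K : Type*} [Field K]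
    (f : LaurentSeries K) :
    (∀ g : PowerSeries K, (f * (g : LaurentSeries K)).coeff (-1) = 0) ↔
      ∀ n : ℤ, n < 0 → f.coeff n = 0 := by
  constructor
  · intro h n hn
    obtain ⟨m, hm⟩ : ∃ m : ℕ, n = -1 - m := ⟨(-1 - n).toNat, by omega⟩
    have := h (PowerSeries.X ^ m)
    rw [HahnSeries.ofPowerSeries_X_pow,
      show (-1 : ℤ) = n + (m : ℤ) by omega,
      HahnSeries.coeff_mul_single_add, mul_one] at this
    exact this
  · intro h g
    rw [HahnSeries.coeff_mul]
    apply Finset.sum_eq_zero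
    rintro ⟨i, j⟩ hij
    rw [Finset.mem_addAntidiagonal] at hij
    obtain ⟨hi, hj, hsum⟩ := hij
    by_cases hi0 : i < 0
    · rw [h i hi0, zero_mul]
    · exfalso
      have hj0 : j < 0 := by omega
      have hz : ((g : LaurentSeries K)).coeff j = 0 := by
        rw [PowerSeries.coeff_coe, if_pos hj0]
      exact (HahnSeries.mem_support _ _ |>.mp hj) hz
end

section
/- Let g be a Lie algebra over a field K of characteristic zero and κ : g × g → K a symmetric bilinear form that is invariant, i.e., κ([x,y], w) = κ(x, [y,w]) for all x,y,w. Define c on pure tensors of the loop algebra g ⊗ K[z, z^{-1}] by c(x ⊗ f, y ⊗ g) = κ(x,y) · Res(f · g'). Then c satisfies the Lie 2-cocycle identity: c([x,y] ⊗ f·g, w ⊗ h) + c([y,w] ⊗ g·h, x ⊗ f) + c([w,x] ⊗ h·f, y ⊗ g) = 0 for all x,y,w ∈ g and all Laurent polynomials f, g, h. -/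
/-- The residue of a Laurent polynomial: the coefficient of `z⁻¹`. -/
noncomputable def lpRes {K : Type*} [Field K] (f : LaurentPolynomial K) : K :=
  (AddMonoidAlgebra.coeff f : ℤ →₀ K) (-1)

/-- The formal derivative of a Laurent polynomial: `∑ aₙ zⁿ ↦ ∑ n aₙ zⁿ⁻¹`. -/
noncomputable def lpDeriv {K : Type*} [Field K] (f : LaurentPolynomial K) :
    LaurentPolynomial K :=
  AddMonoidAlgebra.ofCoeff
    ((AddMonoidAlgebra.coeff f : ℤ →₀ K).sum fun n a => (Finsupp.single (n - 1) (n • a) : ℤ →₀ K))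

section aux
variable {K : Type*} [Field K]

lemma lpDeriv_single (n : ℤ) (a : K) :
    lpDeriv (AddMonoidAlgebra.single n a : LaurentPolynomial K)
      = (AddMonoidAlgebra.single (n - 1) (n • a) : LaurentPolynomial K) := by
  unfold lpDeriv
  exact congrArg AddMonoidAlgebra.ofCoeff (Finsupp.sum_single_index (by simp))

lemma lpDeriv_add (f g : LaurentPolynomial K) :
    lpDeriv (f + g) = lpDeriv f + lpDeriv g := by
  unfold lpDeriv
  rw [AddMonoidAlgebra.coeff_add, ← AddMonoidAlgebra.ofCoeff_add]
  exact congrArg AddMonoidAlgebra.ofCoeff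
    (Finsupp.sum_add_index (by simp) (by intro n _ a b; simp [smul_add, Finsupp.single_add]))

lemma lpDeriv_mul (f g : LaurentPolynomial K) :
    lpDeriv (f * g) = lpDeriv f * g + f * lpDeriv g := by
  induction f using AddMonoidAlgebra.induction_linear with
  | zero => simp [lpDeriv, Finsupp.sum]
  | add p q hp hq =>
      rw [add_mul, lpDeriv_add, hp, hq, lpDeriv_add]; ring
  | single n a =>
      induction g using AddMonoidAlgebra.induction_linear with
      | zero =>
          have : lpDeriv (0 : LaurentPolynomial K) = 0 := by
            simp [lpDeriv, Finsupp.sum]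
          simp [this]
      | add p q hp hq =>
          rw [mul_add, lpDeriv_add, hp, hq, lpDeriv_add]; ring
      | single m b =>
          show lpDeriv ((AddMonoidAlgebra.single n a : LaurentPolynomial K)
                * AddMonoidAlgebra.single m b)
            = lpDeriv (AddMonoidAlgebra.single n a : LaurentPolynomial K)
                * AddMonoidAlgebra.single m b
              + (AddMonoidAlgebra.single n a : LaurentPolynomial K)
                * lpDeriv (AddMonoidAlgebra.single m b : LaurentPolynomial K)
          rw [AddMonoidAlgebra.single_mul_single, lpDeriv_single, lpDeriv_single,
            lpDeriv_single, AddMonoidAlgebra.single_mul_single,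
            AddMonoidAlgebra.single_mul_single]
          have hidx : n - 1 + m = n + m - 1 := by ring
          have hidx2 : n + (m - 1) = n + m - 1 := by ring
          rw [hidx, hidx2]
          show (AddMonoidAlgebra.single (n + m - 1) ((n + m) • (a * b)) : LaurentPolynomial K)
            = AddMonoidAlgebra.single (n + m - 1) (n • a * b) + AddMonoidAlgebra.single (n + m - 1) (a * m • b)
          rw [← AddMonoidAlgebra.single_add]
          congr 1
          push_cast [zsmul_eq_mul]
          ring

lemma lpRes_deriv (f : LaurentPolynomial K) : lpRes (lpDeriv f) = 0 := by
  unfold lpRes lpDeriv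
  rw [AddMonoidAlgebra.coeff_ofCoeff, Finsupp.sum_apply]
  apply Finset.sum_eq_zero
  intro n _
  show (Finsupp.single (n - 1) (n • AddMonoidAlgebra.coeff f n) : ℤ →₀ K) (-1) = 0
  rw [Finsupp.single_apply]
  split_ifs with hn
  · have : n = 0 := by omega
    simp [this]
  · rfl

lemma lpRes_add (f g : LaurentPolynomial K) : lpRes (f + g) = lpRes f + lpRes g := by
  unfold lpRes; rw [AddMonoidAlgebra.coeff_add, Finsupp.add_apply]

end aux

/-- The Kac–Moody 2-cocycle identity.  Let `𝔤` be a Lie algebra over a field `K` of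
characteristic zero and `κ` a symmetric invariant bilinear form on `𝔤`.  The cocycle
`c(x ⊗ f, y ⊗ g) = κ(x,y) · Res(f · g')` on the loop algebra `𝔤 ⊗ K[z,z⁻¹]` satisfies
the Lie 2-cocycle identity
`c([x,y] ⊗ fg, w ⊗ h) + c([y,w] ⊗ gh, x ⊗ f) + c([w,x] ⊗ hf, y ⊗ g) = 0`. -/
theorem kacMoody_cocycle_identity {K : Type*} [Field K] [CharZero K]
    {𝔤 : Type*} [LieRing 𝔤] [LieAlgebra K 𝔤]
    (κ : 𝔤 →ₗ[K] 𝔤 →ₗ[K] K)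
    (hsymm : ∀ x y : 𝔤, κ x y = κ y x)
    (hinv : ∀ x y w : 𝔤, κ ⁅x, y⁆ w = κ x ⁅y, w⁆)
    (x y w : 𝔤) (f g h : LaurentPolynomial K) :
    κ ⁅x, y⁆ w * lpRes (f * g * lpDeriv h)
      + κ ⁅y, w⁆ x * lpRes (g * h * lpDeriv f)
      + κ ⁅w, x⁆ y * lpRes (h * f * lpDeriv g) = 0 := by
  have k1 : κ ⁅y, w⁆ x = κ ⁅x, y⁆ w := by rw [← hsymm, ← hinv]
  have k2 : κ ⁅w, x⁆ y = κ ⁅x, y⁆ w := by rw [hinv, hsymm]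
  rw [k1, k2, ← mul_add, ← mul_add, ← lpRes_add, ← lpRes_add]
  have : f * g * lpDeriv h + g * h * lpDeriv f + h * f * lpDeriv g
      = lpDeriv (f * g * h) := by
    rw [lpDeriv_mul, lpDeriv_mul]; ring
  rw [this, lpRes_deriv, mul_zero]
end
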